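/- Let L* be a d-subspace of ℝ^D with d ≥ 1, and let the dataset X consist of N_in inlier points lying in L* and in general position in L*, together with N_out arbitrary outlier points in ℝ^D. If N_in > N_out + d − 1 (equivalently, N_out < (N − d + 1)/2 where N = N_in + N_out), then for every d-subspace L of ℝ^D with L ≠ L*, the number of data points of X lying in L is strictly less than the number of data points of X lying in L*; in particular, L* is the unique maximizer of |X ∩ L| over all d-subspaces L. -/

import Mathlib

open Module

/-- The points `a` (a family in `ℝ^D`, duplicates allowed) are in *general position* in a
`d`-dimensional subspace: every selection of `d` of them at distinct indices is linearly
independent. -/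
def InGenPos {D N : ℕ} (a : Fin N → EuclideanSpace ℝ (Fin D)) (d : ℕ) : Prop :=
  ∀ s : Finset (Fin N), s.card = d →
    LinearIndependent ℝ (fun i : {x : Fin N // x ∈ s} => a i.1)

/-- Number of points of the family `x` lying in the subspace `L`. -/
noncomputable def countIn {D N : ℕ} (x : Fin N → EuclideanSpace ℝ (Fin D))
    (L : Submodule ℝ (EuclideanSpace ℝ (Fin D))) : ℕ :=
  Nat.card {i : Fin N // x i ∈ L}

/-- If the inliers lie in the `d`-subspace `L*`, are in general position in
`L*`, and `N_in > N_out + d - 1`, then every `d`-subspace `L ≠ L*` contains strictly fewer data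
points than `L*`; in particular `L*` is the unique maximizer of `|X ∩ L|` over `d`-subspaces. -/
theorem stmt_0 (D d Nin Nout : ℕ) (hd : 1 ≤ d)
    (Lstar : Submodule ℝ (EuclideanSpace ℝ (Fin D)))
    (hLstar : finrank ℝ Lstar = d)
    (a : Fin Nin → EuclideanSpace ℝ (Fin D)) (haL : ∀ i, a i ∈ Lstar)
    (hgp : InGenPos a d)
    (o : Fin Nout → EuclideanSpace ℝ (Fin D))
    (hSNR : Nout + d - 1 < Nin) :
    (∀ L : Submodule ℝ (EuclideanSpace ℝ (Fin D)), finrank ℝ L = d → L ≠ Lstar →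
      countIn a L + countIn o L < countIn a Lstar + countIn o Lstar) ∧
    (∀ L : Submodule ℝ (EuclideanSpace ℝ (Fin D)), finrank ℝ L = d →
      countIn a Lstar + countIn o Lstar ≤ countIn a L + countIn o L → L = Lstar) := by
  classical
  have key : ∀ L : Submodule ℝ (EuclideanSpace ℝ (Fin D)), finrank ℝ L = d → L ≠ Lstar →
      countIn a L < d := by
    intro L hL hne
    by_contra h
    push_neg at h
    have hcard : countIn a L = (Finset.univ.filter fun i => a i ∈ L).card := by
      simp [countIn, Nat.card_eq_fintype_card, Fintype.card_subtype]
    rw [hcard] at h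
    obtain ⟨s, hs_sub, hs_card⟩ := Finset.exists_subset_card_eq h
    have hind := hgp s hs_card
    have hmem : ∀ i : {x // x ∈ s}, a i.1 ∈ L ⊓ Lstar := by
      intro i
      refine ⟨?_, haL i.1⟩
      have := hs_sub i.2
      simpa using this
    have hspan : Submodule.span ℝ (Set.range fun i : {x // x ∈ s} => a i.1) ≤ L ⊓ Lstar := by
      rw [Submodule.span_le]; rintro _ ⟨i, rfl⟩; exact hmem i
    have hd_le : d ≤ finrank ℝ (L ⊓ Lstar : Submodule ℝ (EuclideanSpace ℝ (Fin D))) := by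
      have h1 : finrank ℝ (Submodule.span ℝ
          (Set.range fun i : {x // x ∈ s} => a i.1)) = d := by
        rw [finrank_span_eq_card hind]
        simp [hs_card]
      calc d = _ := h1.symm
        _ ≤ _ := Submodule.finrank_mono hspan
    have hLeq : L ⊓ Lstar = L :=
      Submodule.eq_of_le_of_finrank_le inf_le_left (by rw [hL]; exact hd_le)
    have hReq : L ⊓ Lstar = Lstar :=
      Submodule.eq_of_le_of_finrank_le inf_le_right (by rw [hLstar]; exact hd_le)
    exact hne (hLeq ▸ hReq)
  have hstar : countIn a Lstar = Nin := by
    have : Nat.card {i : Fin Nin // a i ∈ Lstar} = Nat.card (Fin Nin) :=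
      Nat.card_congr (Equiv.subtypeUnivEquiv haL)
    simpa [countIn] using this
  have hout : ∀ L : Submodule ℝ (EuclideanSpace ℝ (Fin D)), countIn o L ≤ Nout := by
    intro L
    have := Fintype.card_subtype_le (fun i : Fin Nout => o i ∈ L)
    simpa [countIn, Nat.card_eq_fintype_card] using this
  have main : ∀ L : Submodule ℝ (EuclideanSpace ℝ (Fin D)), finrank ℝ L = d → L ≠ Lstar →
      countIn a L + countIn o L < countIn a Lstar + countIn o Lstar := by
    intro L hL hne
    have h1 := key L hL hne
    have h2 := hout L
    omega
  refine ⟨main, fun L hL hle => ?_⟩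
  by_contra hne
  exact absurd hle (not_le.mpr (main L hL hne))
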